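/- For j > k, the partial derivative of the eigenvalue λ_k in the Riemann-invariant coordinates satisfies ∂λ_k/∂w_j = -(λ_j - λ_k)/(1 - w_j), where λ_k(w) = v_k - (Σ_{l=k+1}^N (v_l - v_k) w_l Π_{r=k}^{l-1}(1-w_r))/(Π_{l=k}^N(1-w_l)). -/

import Mathlib

set_option maxHeartbeats 1000000

lemma tel {α : Type*} [LinearOrder α] (s : Finset α) (f : α → ℝ) :
    ∑ l ∈ s, f l * ∏ r ∈ s.filter (· < l), (1 - f r) = 1 - ∏ l ∈ s, (1 - f l) := by
  induction s using Finset.induction_on_max with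
  | empty => simp
  | insert x s hx ih =>
    have hxs : x ∉ s := fun h => lt_irrefl x (hx x h)
    rw [Finset.sum_insert hxs, Finset.prod_insert hxs]
    have h1 : (insert x s).filter (· < x) = s := by
      ext a; simp only [Finset.mem_filter, Finset.mem_insert]
      constructor
      · rintro ⟨h | h, hlt⟩
        · exact absurd hlt (by simp [h])
        · exact h
      · intro h; exact ⟨Or.inr h, hx a h⟩
    have h2 : ∀ l ∈ s, (insert x s).filter (· < l) = s.filter (· < l) := by
      intro l hl
      ext a; simp only [Finset.mem_filter, Finset.mem_insert]
      constructor
      · rintro ⟨h | h, hlt⟩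
        · exact absurd hlt (not_lt.2 (hx l hl).le ∘ fun h' => h ▸ h')
        · exact ⟨h, hlt⟩
      · rintro ⟨h, hlt⟩; exact ⟨Or.inr h, hlt⟩
    rw [h1, Finset.sum_congr rfl fun l hl => by rw [h2 l hl], ih]
    ring



/-- For `j > k`, the partial derivative of the eigenvalue in Riemann-invariant
coordinates satisfies `∂λ_k/∂w_j = -(λ_j - λ_k)/(1 - w_j)`. -/
theorem stmt9 (N : ℕ) (hN : 1 ≤ N) (v : Fin (N+1) → ℝ)
    (hv : StrictMono v) (hv0 : v 0 = 0) (hvN : v (Fin.last N) = 1)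
    (w : Fin (N+1) → ℝ) (hw : ∀ j, 0 < w j ∧ w j < 1)
    (lam : Fin (N+1) → (Fin (N+1) → ℝ) → ℝ)
    (hlam : ∀ k u, lam k u =
      v k - (∑ l ∈ Finset.Ioi k, (v l - v k) * u l * ∏ r ∈ Finset.Ico k l, (1 - u r)) /
        ∏ l ∈ Finset.Ici k, (1 - u l)) :
    ∀ j k : Fin (N+1), k < j →
      fderiv ℝ (lam k) w (Pi.single j 1) = -(lam j w - lam k w) / (1 - w j) := by
  intro j k hkj
  have h1w : ∀ i : Fin (N+1), (1 : ℝ) - w i ≠ 0 := fun i => by have := (hw i).2; linarith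
  -- constants
  set Pkj : ℝ := ∏ r ∈ Finset.Ico k j, (1 - w r) with hPkj
  set Pj' : ℝ := ∏ l ∈ Finset.Ioi j, (1 - w l) with hPj'
  set Q : Fin (N+1) → ℝ := fun l => ∏ r ∈ Finset.Ioo j l, (1 - w r) with hQ
  set A : ℝ := ∑ l ∈ Finset.Ioo k j, (v l - v k) * w l * ∏ r ∈ Finset.Ico k l, (1 - w r) with hA
  set B : ℝ := (v j - v k) * Pkj with hB
  set C' : ℝ := ∑ l ∈ Finset.Ioi j, (v l - v k) * w l * Q l with hC'
  set C : ℝ := Pkj * C' with hC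
  set D : ℝ := Pkj * Pj' with hD
  set S' : ℝ := ∑ l ∈ Finset.Ioi j, (v l - v j) * w l * Q l with hS'
  set g : ℝ → ℝ := fun t => v k - (A + B*t + C*(1-t)) / (D*(1-t)) with hgdef
  have hPkj0 : Pkj ≠ 0 := Finset.prod_ne_zero_iff.2 fun i _ => h1w i
  have hPj'0 : Pj' ≠ 0 := Finset.prod_ne_zero_iff.2 fun i _ => h1w i
  have hD0 : D ≠ 0 := mul_ne_zero hPkj0 hPj'0
  -- the one-variable reduction
  have hsplit : Finset.Ioi k = insert j (Finset.Ioo k j ∪ Finset.Ioi j) := by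
    ext a
    simp only [Finset.mem_insert, Finset.mem_union, Finset.mem_Ioi, Finset.mem_Ioo,
      Fin.lt_def, Fin.ext_iff]
    have := hkj
    rw [Fin.lt_def] at this
    omega
  have hjnot : j ∉ Finset.Ioo k j ∪ Finset.Ioi j := by
    simp [Finset.mem_Ioo, Finset.mem_Ioi]
  have hdisj : Disjoint (Finset.Ioo k j) (Finset.Ioi j) := by
    rw [Finset.disjoint_left]
    intro a ha hb
    simp only [Finset.mem_Ioo] at ha
    simp only [Finset.mem_Ioi] at hb
    exact absurd (ha.2.trans hb) (lt_irrefl a)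
  have hsplitIci : Finset.Ici k = insert j (Finset.Ico k j ∪ Finset.Ioi j) := by
    ext a
    simp only [Finset.mem_insert, Finset.mem_union, Finset.mem_Ici, Finset.mem_Ico,
      Finset.mem_Ioi, Fin.lt_def, Fin.le_def, Fin.ext_iff]
    have := hkj; rw [Fin.lt_def] at this
    omega
  have hjnot2 : j ∉ Finset.Ico k j ∪ Finset.Ioi j := by
    simp [Finset.mem_Ico, Finset.mem_Ioi]
  have hdisj2 : Disjoint (Finset.Ico k j) (Finset.Ioi j) := by
    rw [Finset.disjoint_left]
    intro a ha hb
    simp only [Finset.mem_Ico] at ha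
    simp only [Finset.mem_Ioi] at hb
    exact absurd (ha.2.trans hb) (lt_irrefl a)
  have hg : ∀ t : ℝ, lam k (Function.update w j t) = g t := by
    intro t
    rw [hlam]
    have hden : (∏ l ∈ Finset.Ici k, (1 - Function.update w j t l)) = D * (1 - t) := by
      rw [hsplitIci, Finset.prod_insert hjnot2, Finset.prod_union hdisj2,
        Function.update_self]
      rw [Finset.prod_congr rfl (fun r hr => by
        rw [Function.update_of_ne (by
          simp only [Finset.mem_Ico] at hr; exact ne_of_lt hr.2)]),
        Finset.prod_congr (rfl : Finset.Ioi j = Finset.Ioi j) (fun r hr => by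
        rw [Function.update_of_ne (by
          simp only [Finset.mem_Ioi] at hr; exact ne_of_gt hr)])]
      rw [hD]; ring
    have hnum : (∑ l ∈ Finset.Ioi k, (v l - v k) * Function.update w j t l *
        ∏ r ∈ Finset.Ico k l, (1 - Function.update w j t r)) = A + B*t + C*(1-t) := by
      rw [hsplit, Finset.sum_insert hjnot, Finset.sum_union hdisj]
      have e1 : (v j - v k) * Function.update w j t j *
          ∏ r ∈ Finset.Ico k j, (1 - Function.update w j t r) = B * t := by
        rw [Function.update_self, Finset.prod_congr rfl (fun r hr => by
          rw [Function.update_of_ne (by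
            simp only [Finset.mem_Ico] at hr; exact ne_of_lt hr.2)])]
        rw [hB]; ring
      have e2 : (∑ l ∈ Finset.Ioo k j, (v l - v k) * Function.update w j t l *
          ∏ r ∈ Finset.Ico k l, (1 - Function.update w j t r)) = A := by
        apply Finset.sum_congr rfl
        intro l hl
        simp only [Finset.mem_Ioo] at hl
        rw [Function.update_of_ne (ne_of_lt hl.2)]
        congr 1
        apply Finset.prod_congr rfl
        intro r hr
        simp only [Finset.mem_Ico] at hr
        rw [Function.update_of_ne (ne_of_lt (hr.2.trans hl.2))]
      have e3 : (∑ l ∈ Finset.Ioi j, (v l - v k) * Function.update w j t l *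
          ∏ r ∈ Finset.Ico k l, (1 - Function.update w j t r)) = C * (1 - t) := by
        rw [show C * (1-t) = ∑ l ∈ Finset.Ioi j, (1-t) * Pkj * ((v l - v k) * w l * Q l) by
          rw [← Finset.mul_sum, hC]; ring]
        apply Finset.sum_congr rfl
        intro l hl
        simp only [Finset.mem_Ioi] at hl
        rw [Function.update_of_ne (ne_of_gt hl)]
        have hjmem : j ∈ Finset.Ico k l := by
          simp only [Finset.mem_Ico]; exact ⟨le_of_lt hkj, hl⟩
        rw [← Finset.mul_prod_erase _ _ hjmem, Function.update_self]
        have herase : (Finset.Ico k l).erase j = Finset.Ico k j ∪ Finset.Ioo j l := by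
          ext a
          simp only [Finset.mem_erase, Finset.mem_Ico, Finset.mem_union, Finset.mem_Ioo,
            Fin.lt_def, Fin.le_def, Fin.ext_iff]
          have h1 := hkj; rw [Fin.lt_def] at h1
          have h2 := hl; rw [Fin.lt_def] at h2
          omega
        have hdisj3 : Disjoint (Finset.Ico k j) (Finset.Ioo j l) := by
          rw [Finset.disjoint_left]
          intro a ha hb
          simp only [Finset.mem_Ico] at ha
          simp only [Finset.mem_Ioo] at hb
          exact absurd (ha.2.trans hb.1) (lt_irrefl a)
        rw [herase, Finset.prod_union hdisj3]
        rw [Finset.prod_congr rfl (fun r hr => by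
          rw [Function.update_of_ne (by
            simp only [Finset.mem_Ico] at hr; exact ne_of_lt hr.2)]),
          Finset.prod_congr (rfl : Finset.Ioo j l = Finset.Ioo j l) (fun r hr => by
          rw [Function.update_of_ne (by
            simp only [Finset.mem_Ioo] at hr; exact ne_of_gt hr.1)])]
        rw [hQ]
        ring
      rw [e1, e2, e3]; ring
    rw [hnum, hden, hgdef]
  -- lam j w in terms of S', Pj'
  have hsplitIcij : Finset.Ici j = insert j (Finset.Ioi j) := by
    ext a
    simp only [Finset.mem_insert, Finset.mem_Ici, Finset.mem_Ioi, Fin.lt_def, Fin.le_def,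
      Fin.ext_iff]
    omega
  have hjnotIoi : j ∉ Finset.Ioi j := by simp
  have hlamj : lam j w = v j - S' / Pj' := by
    rw [hlam]
    have hden : (∏ l ∈ Finset.Ici j, (1 - w l)) = (1 - w j) * Pj' := by
      rw [hsplitIcij, Finset.prod_insert hjnotIoi, ← hPj']
    have hnum : (∑ l ∈ Finset.Ioi j, (v l - v j) * w l * ∏ r ∈ Finset.Ico j l, (1 - w r))
        = (1 - w j) * S' := by
      rw [show (1 - w j) * S' = ∑ l ∈ Finset.Ioi j, (1 - w j) * ((v l - v j) * w l * Q l) by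
        rw [← Finset.mul_sum, hS']]
      apply Finset.sum_congr rfl
      intro l hl
      simp only [Finset.mem_Ioi] at hl
      have hIco : Finset.Ico j l = insert j (Finset.Ioo j l) := by
        ext a
        simp only [Finset.mem_insert, Finset.mem_Ico, Finset.mem_Ioo, Fin.lt_def, Fin.le_def,
          Fin.ext_iff]
        have := hl; rw [Fin.lt_def] at this
        omega
      have : j ∉ Finset.Ioo j l := by simp
      rw [hIco, Finset.prod_insert this, hQ]
      ring
    rw [hnum, hden, mul_div_mul_left _ _ (h1w j)]
  -- telescoping
  have htel : ∑ l ∈ Finset.Ioi j, w l * Q l = 1 - Pj' := by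
    have h := tel (Finset.Ioi j) w
    rw [hPj']
    rw [← h]
    apply Finset.sum_congr rfl
    intro l _
    congr 1
    rw [hQ]
    apply Finset.prod_congr _ fun _ _ => rfl
    ext a
    simp [Finset.mem_filter, Finset.mem_Ioi, Finset.mem_Ioo, and_comm]
  have hkey : C' - S' = (v j - v k) * (1 - Pj') := by
    rw [← htel, hC', hS', Finset.mul_sum, ← Finset.sum_sub_distrib]
    exact Finset.sum_congr rfl fun l _ => by ring
  -- differentiability
  have hfac : ∀ (s : Finset (Fin (N+1))), DifferentiableAt ℝ
      (fun u : Fin (N+1) → ℝ => ∏ r ∈ s, (1 - u r)) w := by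
    intro s
    exact HasFDerivAt.differentiableAt <| HasFDerivAt.finset_prod
      (g := fun r (u : Fin (N+1) → ℝ) => 1 - u r)
      (fun r _ => ((differentiableAt_const (1:ℝ)).sub (differentiableAt_apply r w)).hasFDerivAt)
  have hSdiff : DifferentiableAt ℝ (fun u : Fin (N+1) → ℝ =>
      ∑ l ∈ Finset.Ioi k, (v l - v k) * u l * ∏ r ∈ Finset.Ico k l, (1 - u r)) w := by
    apply DifferentiableAt.fun_sum
    intro l _
    exact ((differentiableAt_const _).mul (differentiableAt_apply l w)).mul (hfac _)
  have hfun : lam k = fun u : Fin (N+1) → ℝ => v k -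
      (∑ l ∈ Finset.Ioi k, (v l - v k) * u l * ∏ r ∈ Finset.Ico k l, (1 - u r)) /
        ∏ l ∈ Finset.Ici k, (1 - u l) := funext (hlam k)
  have hP0 : (∏ l ∈ Finset.Ici k, (1 - w l)) ≠ 0 :=
    Finset.prod_ne_zero_iff.2 fun i _ => h1w i
  have hdiff : DifferentiableAt ℝ (lam k) w := by
    rw [hfun]
    simp only [div_eq_mul_inv]
    exact (differentiableAt_const _).sub (hSdiff.mul ((hfac _).inv hP0))
  -- derivative of update
  have hupd : (fun t : ℝ => Function.update w j t)
      = fun t => w + (t - w j) • (Pi.single j 1 : Fin (N+1) → ℝ) := by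
    funext t
    funext i
    by_cases h : i = j
    · subst h; simp
    · simp [Function.update_of_ne h, Pi.single_eq_of_ne h]
  have hφ : HasDerivAt (fun t : ℝ => Function.update w j t)
      ((Pi.single j 1 : Fin (N+1) → ℝ)) (w j) := by
    rw [hupd]
    simpa using (((hasDerivAt_id (w j)).sub_const (w j)).smul_const
      ((Pi.single j 1 : Fin (N+1) → ℝ))).const_add w
  -- chain rule
  have hfd : HasFDerivAt (lam k) (fderiv ℝ (lam k) w) (Function.update w j (w j)) := by
    rw [Function.update_eq_self]; exact hdiff.hasFDerivAt
  have hchain : HasDerivAt (fun t : ℝ => lam k (Function.update w j t))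
      (fderiv ℝ (lam k) w (Pi.single j 1)) (w j) := hfd.comp_hasDerivAt (w j) hφ
  have heqfun : (fun t : ℝ => lam k (Function.update w j t)) = g := funext hg
  rw [heqfun] at hchain
  -- derivative of g
  have hn : HasDerivAt (fun t : ℝ => A + B*t + C*(1-t)) (B - C) (w j) := by
    have h1 := (((hasDerivAt_id (w j)).const_mul B).const_add A).add
      (((hasDerivAt_const (w j) (1:ℝ)).sub (hasDerivAt_id (w j))).const_mul C)
    refine h1.congr_deriv ?_
    ring
  have hd2 : HasDerivAt (fun t : ℝ => D*(1-t)) (-D) (w j) := by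
    have h1 := ((hasDerivAt_const (w j) (1:ℝ)).sub (hasDerivAt_id (w j))).const_mul D
    refine h1.congr_deriv ?_
    ring
  have hDt0 : D * (1 - w j) ≠ 0 := mul_ne_zero hD0 (h1w j)
  have hgd : HasDerivAt g
      (-(((B - C) * (D*(1 - w j)) - (A + B*(w j) + C*(1 - w j)) * (-D)) / (D*(1 - w j))^2))
      (w j) := by
    rw [hgdef]
    exact (hn.div hd2 hDt0).const_sub (v k)
  have hval := hchain.unique hgd
  rw [hval]
  -- final algebra
  have hlamkw : lam k w = g (w j) := by
    have h := hg (w j)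
    rwa [Function.update_eq_self] at h
  have h1wj : (1:ℝ) - w j ≠ 0 := h1w j
  have hBC : B - C = (v j - v k) * D - Pkj * S' := by
    rw [hB, hC, hD]; linear_combination (-Pkj) * hkey
  rw [hlamj, hlamkw, hgdef]
  simp only
  rw [hBC, hD]
  field_simp
  ring
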